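/- Let C be a pointed, spanning polyhedral cone in E = ℝⁿ with C ≠ {0}, let D ⊆ E be a downset, and let σ be a face of C. If a ∈ E satisfies a − σ° ⊆ D and (a + C) ∩ D^σ = {a} (that is, a is a maximal element of D^σ := {x ∈ E | x − σ° ⊆ D}), then a lies in the topological boundary of D: a ∈ closure(D) and a ∉ interior(D). -/
import Mathlib


open Pointwise

/-- A polyhedral cone in `ℝⁿ`: an intersection of finitely many closed linear half-spaces. -/
def IsPolyCone {n : ℕ} (C : Set (Fin n → ℝ)) : Prop :=
  ∃ (m : ℕ) (ℓ : Fin m → ((Fin n → ℝ) →ₗ[ℝ] ℝ)), C = {x | ∀ i, 0 ≤ ℓ i x}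

/-- A face of a cone `C`: a subset of `C` containing `0`, closed under addition, and such
that whenever `x, y ∈ C` and `x + y` lies in the subset, both `x` and `y` do. -/
def IsConeFace {M : Type*} [AddCommMonoid M] (σ C : Set M) : Prop :=
  σ ⊆ C ∧ (0 : M) ∈ σ ∧ (∀ x ∈ σ, ∀ y ∈ σ, x + y ∈ σ) ∧
    ∀ x ∈ C, ∀ y ∈ C, x + y ∈ σ → x ∈ σ ∧ y ∈ σ

/-- A downset for the partial order `x ≼ y ↔ y - x ∈ C`. -/
def IsDownset {n : ℕ} (C D : Set (Fin n → ℝ)) : Prop :=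
  ∀ x y : Fin n → ℝ, y ∈ D → y - x ∈ C → x ∈ D

/-- The upper boundary downset `D^σ = {a | a - σ° ⊆ D}`. -/
def upSet {n : ℕ} (D σ : Set (Fin n → ℝ)) : Set (Fin n → ℝ) :=
  {a | ∀ s ∈ intrinsicInterior ℝ σ, a - s ∈ D}

/-- `a` is a cogenerator of the downset `D` along the face `τ` with nadir `σ`:
`(a + C) ∩ D^σ = a + τ` and no face `σ''` with `τ ⊆ σ'' ⊊ σ` satisfies `a - σ''° ⊆ D`. -/
def IsCogen {n : ℕ} (C D τ σ : Set (Fin n → ℝ)) (a : Fin n → ℝ) : Prop :=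
  (({a} + C) ∩ upSet D σ = {a} + τ) ∧
  ∀ σ'' : Set (Fin n → ℝ), IsConeFace σ'' C → τ ⊆ σ'' → σ'' ⊂ σ →
    ¬ (∀ s ∈ intrinsicInterior ℝ σ'', a - s ∈ D)

/-- A `σ`-vicinity of a point `p` of `E ⧸ span τ`: the image under the quotient map of
`u + σ° + C` for some `u` admitting a representative `w` of `p` with `w - u ∈ σ°`. -/
def IsVic {n : ℕ} (C σ τ : Set (Fin n → ℝ))
    (p : (Fin n → ℝ) ⧸ Submodule.span ℝ τ)
    (V : Set ((Fin n → ℝ) ⧸ Submodule.span ℝ τ)) : Prop :=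
  ∃ u w : Fin n → ℝ, (Submodule.span ℝ τ).mkQ w = p ∧
    w - u ∈ intrinsicInterior ℝ σ ∧
    V = (Submodule.span ℝ τ).mkQ '' ({u} + intrinsicInterior ℝ σ + C)

/-- Membership in the intrinsic interior, metric characterization. -/
lemma mem_intrinsicInterior_iff_aux {n : ℕ} (σ : Set (Fin n → ℝ)) (x : Fin n → ℝ) :
    x ∈ intrinsicInterior ℝ σ ↔
      x ∈ affineSpan ℝ σ ∧ ∃ ε > 0, ∀ y ∈ affineSpan ℝ σ, dist y x < ε → y ∈ σ := by
  rw [mem_intrinsicInterior]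
  constructor
  · rintro ⟨y, hy, rfl⟩
    refine ⟨y.2, ?_⟩
    rw [mem_interior_iff_mem_nhds, Metric.mem_nhds_iff] at hy
    obtain ⟨ε, hε, hball⟩ := hy
    refine ⟨ε, hε, fun z hz hdz => ?_⟩
    exact hball (show (⟨z, hz⟩ : affineSpan ℝ σ) ∈ Metric.ball y ε by
      simpa [Metric.mem_ball, Subtype.dist_eq] using hdz)
  · rintro ⟨hx, ε, hε, h⟩
    refine ⟨⟨x, hx⟩, ?_, rfl⟩
    rw [mem_interior_iff_mem_nhds, Metric.mem_nhds_iff]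
    refine ⟨ε, hε, fun z hz => ?_⟩
    exact h z z.2 (by simpa [Metric.mem_ball, Subtype.dist_eq] using hz)

/-- A polyhedral cone is closed under nonnegative scaling. -/
lemma IsPolyCone.smul_mem {n : ℕ} {C : Set (Fin n → ℝ)} (hC : IsPolyCone C)
    {t : ℝ} (ht : 0 ≤ t) {x : Fin n → ℝ} (hx : x ∈ C) : t • x ∈ C := by
  obtain ⟨m, ℓ, rfl⟩ := hC
  intro i
  have := hx i
  have : (ℓ i) (t • x) = t * ℓ i x := by simp
  rw [this]
  exact mul_nonneg ht (hx i)

/-- A face of a polyhedral cone is closed under scaling by `t ∈ (0,1]`. -/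
lemma face_smul_mem {n : ℕ} {C σ : Set (Fin n → ℝ)} (hC : IsPolyCone C)
    (hσ : IsConeFace σ C) {t : ℝ} (ht0 : 0 < t) (ht1 : t ≤ 1)
    {x : Fin n → ℝ} (hx : x ∈ σ) : t • x ∈ σ := by
  rcases eq_or_lt_of_le ht1 with rfl | ht1
  · simpa using hx
  · have hxC : x ∈ C := hσ.1 hx
    have htx : t • x ∈ C := hC.smul_mem ht0.le hxC
    have h1tx : (1 - t) • x ∈ C := hC.smul_mem (by linarith) hxC
    have hsum : t • x + (1 - t) • x ∈ σ := by
      have : t • x + (1 - t) • x = x := by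
        rw [← add_smul]; ring_nf; exact one_smul ℝ x
      rw [this]; exact hx
    exact (hσ.2.2.2 _ htx _ h1tx hsum).1

/-- A face of a polyhedral cone is convex. -/
lemma face_convex {n : ℕ} {C σ : Set (Fin n → ℝ)} (hC : IsPolyCone C)
    (hσ : IsConeFace σ C) : Convex ℝ σ := by
  intro x hx y hy s t hs ht hst
  rcases eq_or_lt_of_le hs with rfl | hs
  · simp only [zero_add] at hst; subst hst; simpa using hy
  rcases eq_or_lt_of_le ht with rfl | ht
  · simp only [add_zero] at hst; subst hst; simpa using hx
  exact hσ.2.2.1 _ (face_smul_mem hC hσ hs (by linarith) hx)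
    _ (face_smul_mem hC hσ ht (by linarith) hy)

/-- The relative interior of a face is closed under scaling by `t ∈ (0,1]`. -/
lemma face_smul_mem_intrinsicInterior {n : ℕ} {C σ : Set (Fin n → ℝ)} (hC : IsPolyCone C)
    (hσ : IsConeFace σ C) {t : ℝ} (ht0 : 0 < t) (ht1 : t ≤ 1)
    {x : Fin n → ℝ} (hx : x ∈ intrinsicInterior ℝ σ) : t • x ∈ intrinsicInterior ℝ σ := by
  rw [mem_intrinsicInterior_iff_aux] at hx ⊢
  obtain ⟨hxA, ε, hε, h⟩ := hx
  have h0A : (0 : Fin n → ℝ) ∈ affineSpan ℝ σ := subset_affineSpan ℝ σ hσ.2.1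
  have smulA : ∀ (c : ℝ) (z : Fin n → ℝ), z ∈ affineSpan ℝ σ → c • z ∈ affineSpan ℝ σ := by
    intro c z hz
    have := (affineSpan ℝ σ).smul_vsub_vadd_mem c hz h0A h0A
    simpa using this
  refine ⟨smulA t x hxA, t * ε, mul_pos ht0 hε, fun y hyA hyd => ?_⟩
  have hz : t⁻¹ • y ∈ σ := by
    refine h _ (smulA t⁻¹ y hyA) ?_
    have : dist (t⁻¹ • y) (t⁻¹ • (t • x)) = ‖t⁻¹‖ * dist y (t • x) := dist_smul₀ t⁻¹ y (t • x)
    rw [smul_smul, inv_mul_cancel₀ ht0.ne', one_smul] at this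
    rw [this, Real.norm_eq_abs, abs_of_pos (inv_pos.mpr ht0)]
    calc t⁻¹ * dist y (t • x) < t⁻¹ * (t * ε) := by
          exact mul_lt_mul_of_pos_left hyd (inv_pos.mpr ht0)
      _ = ε := by field_simp
  have := face_smul_mem hC hσ ht0 ht1 hz
  rwa [smul_inv_smul₀ ht0.ne'] at this

/-- A maximal element of `D^σ` lies on the topological boundary of `D`. -/
theorem max_of_upSet_mem_frontier {n : ℕ} (C D σ : Set (Fin n → ℝ))
    (hC : IsPolyCone C) (hpointed : C ∩ (-C) = {0}) (hspan : C - C = Set.univ)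
    (hne : C ≠ {0}) (hD : IsDownset C D) (hσ : IsConeFace σ C) (a : Fin n → ℝ)
    (haD : ∀ s ∈ intrinsicInterior ℝ σ, a - s ∈ D)
    (hmax : ({a} + C) ∩ upSet D σ = {a}) :
    a ∈ closure D ∧ a ∉ interior D := by
  constructor
  · -- a ∈ closure D, via a - (1/(k+1)) • s → a with s ∈ σ°
    obtain ⟨s, hs⟩ : (intrinsicInterior ℝ σ).Nonempty :=
      Set.Nonempty.intrinsicInterior (face_convex hC hσ) ⟨0, hσ.2.1⟩
    have hmem : ∀ k : ℕ, a - (1 / (k + 1) : ℝ) • s ∈ D := by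
      intro k
      refine haD _ (face_smul_mem_intrinsicInterior hC hσ ?_ ?_ hs)
      · positivity
      · rw [div_le_one (by positivity)]
        linarith [Nat.cast_nonneg (α := ℝ) k]
    have htend : Filter.Tendsto (fun k : ℕ => a - (1 / (k + 1) : ℝ) • s)
        Filter.atTop (nhds a) := by
      have h1 : Filter.Tendsto (fun k : ℕ => (1 / (k + 1) : ℝ)) Filter.atTop (nhds 0) :=
        tendsto_one_div_add_atTop_nhds_zero_nat
      have h2 : Filter.Tendsto (fun k : ℕ => (1 / (k + 1) : ℝ) • s) Filter.atTop
          (nhds ((0 : ℝ) • s)) := h1.smul_const s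
      rw [zero_smul] at h2
      have := (tendsto_const_nhds (x := a) (f := Filter.atTop (α := ℕ))).sub h2
      simpa using this
    exact mem_closure_of_tendsto htend (Filter.Eventually.of_forall hmem)
  · -- a ∉ interior D
    intro hint
    rw [mem_interior_iff_mem_nhds, Metric.mem_nhds_iff] at hint
    obtain ⟨ε, hε, hball⟩ := hint
    -- pick c ∈ C, c ≠ 0
    have h0C : (0 : Fin n → ℝ) ∈ C := by
      obtain ⟨m, ℓ, rfl⟩ := hC
      intro i; simp
    obtain ⟨c, hcC, hc0⟩ : ∃ c ∈ C, c ≠ 0 := by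
      by_contra h
      push_neg at h
      exact hne (Set.eq_singleton_iff_unique_mem.mpr ⟨h0C, h⟩)
    set t : ℝ := ε / (2 * (‖c‖ + 1)) with ht_def
    have ht0 : 0 < t := by positivity
    have htc : ‖t • c‖ < ε := by
      rw [norm_smul, Real.norm_eq_abs, abs_of_pos ht0, ht_def]
      rw [div_mul_eq_mul_div, div_lt_iff₀ (by positivity)]
      nlinarith [norm_nonneg c]
    have haD' : a + t • c ∈ D := by
      apply hball
      simp only [Metric.mem_ball, dist_eq_norm]
      simpa using htc
    have hup : a + t • c ∈ upSet D σ := by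
      intro s hsI
      have hsC : s ∈ C := hσ.1 (intrinsicInterior_subset hsI)
      exact hD (a + t • c - s) (a + t • c) haD' (by simpa using hsC)
    have hin : a + t • c ∈ ({a} + C) ∩ upSet D σ := by
      refine ⟨?_, hup⟩
      exact Set.add_mem_add rfl (hC.smul_mem ht0.le hcC)
    rw [hmax] at hin
    have : t • c = 0 := by
      have := Set.mem_singleton_iff.mp hin
      have h := congrArg (fun z => z - a) this
      simpa using h
    exact hc0 (by simpa [smul_eq_zero, ht0.ne'] using this)
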